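/- For every kind of preferences pref ∈ {ct, ca, pca}, there exists a resource contribution game with independent objectives G such that NE^pref(G) = ∅. Concretely, for distinct atomic resources A, B, C, the three-player RCG with ε_1 = {A·B}, ε_2 = {B·C}, ε_3 = {A·C}, γ_1 = A, γ_2 = B, γ_3 = C has independent objectives and satisfies NE^ct(G) = NE^ca(G) = NE^pca(G) = ∅. -/

import Mathlib

open scoped Classical

/-- A resource contribution game over atomic resource type `Res` with player set `ι`:
each player has a goal (a resource bundle, i.e. a multiset of atomic resources) and
an endowment (a resource bag, i.e. a multiset of resource bundles). -/
structure RCG (Res ι : Type*) where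
  goal : ι → Multiset Res
  endow : ι → Multiset (Multiset Res)

namespace RCG

variable {Res ι : Type*} [Fintype ι]

/-- A profile assigns to each player a bag (his contribution). -/
abbrev Profile (Res ι : Type*) := ι → Multiset (Multiset Res)

/-- Outcome of a profile: the multiset sum of all contributions. -/
def out (P : Profile Res ι) : Multiset (Multiset Res) := ∑ i, P i

/-- The bag `X` can be transformed into the bundle `B`: `♭(B) ⊆ ♭•(X)`. -/
def Trans (X : Multiset (Multiset Res)) (B : Multiset Res) : Prop := B ≤ X.sum

/-- Player `i` is potentially satisfied by profile `P`. -/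
def Psat (G : RCG Res ι) (P : Profile Res ι) (i : ι) : Prop :=
  Trans (out P) (G.goal i)

/-- The set of players potentially satisfied by `P`. -/
noncomputable def psatPlayers (G : RCG Res ι) (P : Profile Res ι) : Finset ι :=
  Finset.univ.filter fun i => Psat G P i

/-- The profile `P` is contentious. -/
def Contentious (G : RCG Res ι) (P : Profile Res ι) : Prop :=
  ¬ Trans (out P) (∑ j ∈ psatPlayers G P, G.goal j)

/-- Restriction of bundle `B` to the resource types occurring in `C`. -/
noncomputable def restr (B C : Multiset Res) : Multiset Res := B.filter (· ∈ C)

/-- The profile `P` is contentious for player `i`. -/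
def ContentiousFor (G : RCG Res ι) (P : Profile Res ι) (i : ι) : Prop :=
  Psat G P i ∧ ¬ Trans (out P) (∑ j ∈ psatPlayers G P, restr (G.goal j) (G.goal i))

/-- The three kinds of preferences: contention-tolerant, (public) contention-averse,
private contention-averse. -/
inductive Pref | ct | ca | pca

/-- `P` is a good profile for player `i` according to preference kind `pref`. -/
def Good (pref : Pref) (G : RCG Res ι) (P : Profile Res ι) (i : ι) : Prop :=
  match pref with
  | .ct => Psat G P i
  | .ca => Psat G P i ∧ ¬ Contentious G P
  | .pca => Psat G P i ∧ ¬ ContentiousFor G P i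

/-- Player `i` strictly prefers `P` over `Q` (i.e. `Q ≺^pref_i P`). -/
def Prefers (pref : Pref) (G : RCG Res ι) (i : ι) (Q P : Profile Res ι) : Prop :=
  (¬ Good pref G P i ∧ ¬ Good pref G Q i ∧ P i < Q i) ∨
  (Good pref G P i ∧ ¬ Good pref G Q i) ∨
  (Good pref G P i ∧ Good pref G Q i ∧ P i < Q i)

/-- `C` is a profitable deviation for player `i` from profile `P`. -/
noncomputable def ProfDev (pref : Pref) (G : RCG Res ι) (P : Profile Res ι) (i : ι)
    (C : Multiset (Multiset Res)) : Prop :=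
  C ≤ G.endow i ∧ Prefers pref G i P (Function.update P i C)

/-- `P` is a pure Nash equilibrium of `G` according to `pref`:
`P` is a profile of `G` and no player has a profitable deviation. -/
noncomputable def NE (pref : Pref) (G : RCG Res ι) (P : Profile Res ι) : Prop :=
  (∀ i, P i ≤ G.endow i) ∧ ∀ i C, ¬ ProfDev pref G P i C

/-- `G` is an RCG with endowments as bags of atomic resources. -/
def IsRCGBAR (G : RCG Res ι) : Prop :=
  ∀ i, ∀ B ∈ G.endow i, ∃ r : Res, B = {r}

/-- `G` has independent objectives. -/
def IndepObjectives (G : RCG Res ι) : Prop :=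
  ∀ i j : ι, i ≠ j → ∀ r : Res, r ∈ G.goal i → r ∉ G.goal j

end RCG

section Aux

set_option linter.unusedSectionVars false

variable {Res ι : Type*} [Fintype ι]

lemma aux_sum_singletons_le (r : ι → Res) (hr : Function.Injective r)
    (S : Finset ι) (T : Multiset Res) (h : ∀ j ∈ S, r j ∈ T) :
    (∑ j ∈ S, ({r j} : Multiset Res)) ≤ T := by
  classical
  rw [Multiset.le_iff_count]
  intro a
  rw [Multiset.count_sum']
  by_cases hex : ∃ j ∈ S, a = r j
  · obtain ⟨j₀, hj₀S, hj₀⟩ := hex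
    have hterm : ∀ j ∈ S, Multiset.count a ({r j} : Multiset Res)
        = if j = j₀ then 1 else 0 := by
      intro j _
      rw [Multiset.count_singleton]
      by_cases hj : j = j₀
      · subst hj; simp [hj₀]
      · rw [if_neg hj, if_neg]
        intro hc
        exact hj (hr (hj₀ ▸ hc.symm))
    rw [Finset.sum_congr rfl hterm, Finset.sum_ite_eq' S j₀ (fun _ => 1),
      if_pos hj₀S]
    have : a ∈ T := hj₀ ▸ h j₀ hj₀S
    exact Multiset.count_pos.mpr this
  · rw [Finset.sum_eq_zero]
    · exact Nat.zero_le _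
    · intro j hj
      rw [Multiset.count_singleton, if_neg (fun hc => hex ⟨j, hj, hc⟩)]

lemma aux_not_contentious (G : RCG Res ι) (r : ι → Res) (hr : Function.Injective r)
    (hg : ∀ i, G.goal i = {r i}) (P : RCG.Profile Res ι) : ¬ G.Contentious P := by
  intro hc
  apply hc
  unfold RCG.Trans
  rw [Finset.sum_congr rfl (fun j _ => hg j)]
  apply aux_sum_singletons_le r hr
  intro j hj
  have hpsat : RCG.Psat G P j := (Finset.mem_filter.mp hj).2
  have := hpsat
  unfold RCG.Psat RCG.Trans at this
  rw [hg j, Multiset.singleton_le] at this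
  exact this

lemma aux_not_contentiousFor (G : RCG Res ι) (r : ι → Res) (hr : Function.Injective r)
    (hg : ∀ i, G.goal i = {r i}) (P : RCG.Profile Res ι) (i : ι) :
    ¬ G.ContentiousFor P i := by
  rintro ⟨hps, hn⟩
  apply hn
  unfold RCG.Trans
  have hrestr : ∀ j : ι, RCG.restr (G.goal j) (G.goal i)
      = if j = i then ({r i} : Multiset Res) else 0 := by
    intro j
    rw [hg j, hg i]
    unfold RCG.restr
    by_cases hj : j = i
    · subst hj
      rw [if_pos rfl, Multiset.filter_eq_self]
      intro a ha; exact ha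
    · rw [if_neg hj, Multiset.filter_eq_nil]
      intro a ha hmem
      rw [Multiset.mem_singleton] at ha hmem
      exact hj (hr (ha ▸ hmem))
  rw [Finset.sum_congr rfl (fun j _ => hrestr j),
    Finset.sum_ite_eq' (G.psatPlayers P) i (fun _ => ({r i} : Multiset Res))]
  have hiS : i ∈ G.psatPlayers P := Finset.mem_filter.mpr ⟨Finset.mem_univ i, hps⟩
  rw [if_pos hiS]
  have := hps
  unfold RCG.Psat RCG.Trans at this
  rw [hg i] at this
  exact this

lemma aux_good_iff_psat (G : RCG Res ι) (r : ι → Res) (hr : Function.Injective r)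
    (hg : ∀ i, G.goal i = {r i}) (pref : RCG.Pref) (P : RCG.Profile Res ι) (i : ι) :
    RCG.Good pref G P i ↔ RCG.Psat G P i := by
  cases pref with
  | ct => rfl
  | ca =>
    simp only [RCG.Good]
    exact and_iff_left (aux_not_contentious G r hr hg P)
  | pca =>
    simp only [RCG.Good]
    exact and_iff_left (aux_not_contentiousFor G r hr hg P i)

lemma aux_out_update_le (P : RCG.Profile Res ι) (i : ι) :
    (RCG.out (Function.update P i 0)).sum ≤ (RCG.out P).sum := by
  classical
  have h1 : RCG.out (Function.update P i 0) ≤ RCG.out P := by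
    apply Finset.sum_le_sum
    intro j _
    by_cases hj : j = i
    · subst hj; simp
    · rw [Function.update_of_ne hj]
  obtain ⟨u, hu⟩ := Multiset.le_iff_exists_add.mp h1
  rw [hu, Multiset.sum_add]
  exact le_add_right le_rfl

lemma aux_profdev_drop (pref : RCG.Pref) (G : RCG Res ι) (r : ι → Res)
    (hr : Function.Injective r) (hg : ∀ i, G.goal i = {r i})
    (P : RCG.Profile Res ι) (i : ι) (hne : P i ≠ 0)
    (hafter : RCG.Psat G (Function.update P i 0) i) :
    RCG.ProfDev pref G P i 0 := by
  refine ⟨Multiset.zero_le _, ?_⟩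
  have hbefore : RCG.Psat G P i := le_trans hafter (aux_out_update_le P i)
  right; right
  refine ⟨(aux_good_iff_psat G r hr hg pref _ i).mpr hafter,
    (aux_good_iff_psat G r hr hg pref _ i).mpr hbefore, ?_⟩
  rw [Function.update_self]
  exact pos_iff_ne_zero.mpr hne

lemma aux_profdev_add (pref : RCG.Pref) (G : RCG Res ι) (r : ι → Res)
    (hr : Function.Injective r) (hg : ∀ i, G.goal i = {r i})
    (P : RCG.Profile Res ι) (i : ι) (hbefore : ¬ RCG.Psat G P i)
    (hafter : RCG.Psat G (Function.update P i (G.endow i)) i) :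
    RCG.ProfDev pref G P i (G.endow i) := by
  refine ⟨le_rfl, ?_⟩
  right; left
  exact ⟨(aux_good_iff_psat G r hr hg pref _ i).mpr hafter,
    fun h => hbefore ((aux_good_iff_psat G r hr hg pref _ i).mp h)⟩

end Aux

/-- the three-player game with `ε₁={A·B}, ε₂={B·C}, ε₃={A·C}`,
`γ₁=A, γ₂=B, γ₃=C` has independent objectives and no Nash equilibrium for any
kind of preferences. -/
theorem indep_game_no_NE {Res : Type*} (A B C : Res)
    (hAB : A ≠ B) (hBC : B ≠ C) (hAC : A ≠ C)
    (G : RCG Res (Fin 3))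
    (hgoal : G.goal = ![({A} : Multiset Res), ({B} : Multiset Res), ({C} : Multiset Res)])
    (hendow : G.endow = ![({({A, B} : Multiset Res)} : Multiset (Multiset Res)),
                          ({({B, C} : Multiset Res)} : Multiset (Multiset Res)),
                          ({({A, C} : Multiset Res)} : Multiset (Multiset Res))]) :
    RCG.IndepObjectives G ∧
      ∀ pref : RCG.Pref, ∀ P : RCG.Profile Res (Fin 3), ¬ RCG.NE pref G P := by
  have hBA : B ≠ A := hAB.symm
  have hCB : C ≠ B := hBC.symm
  have hCA : C ≠ A := hAC.symm
  set r : Fin 3 → Res := ![A, B, C] with hr_def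
  have hr : Function.Injective r := by
    intro i j h
    fin_cases i <;> fin_cases j <;> simp_all [r]
  have hg : ∀ i, G.goal i = {r i} := by
    intro i; fin_cases i <;> simp [hgoal, r]
  constructor
  · intro i j hij x hxi hxj
    rw [hg i, Multiset.mem_singleton] at hxi
    rw [hg j, Multiset.mem_singleton] at hxj
    exact hij (hr (hxi ▸ hxj))
  · rintro pref P ⟨hle, hnd⟩
    have h0 := hle 0
    have h1 := hle 1
    have h2 := hle 2
    rw [hendow] at h0 h1 h2
    simp only [Matrix.cons_val_zero, Matrix.cons_val_one, Matrix.head_cons,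
      Matrix.cons_val_two, Matrix.tail_cons] at h0 h1 h2
    rw [Multiset.le_singleton] at h0 h1 h2
    have hend0 : G.endow 0 = {({A, B} : Multiset Res)} := by simp [hendow]
    have hend1 : G.endow 1 = {({B, C} : Multiset Res)} := by simp [hendow]
    have hend2 : G.endow 2 = {({A, C} : Multiset Res)} := by simp [hendow]
    -- Psat as membership
    have hpsat : ∀ (Q : RCG.Profile Res (Fin 3)) (i : Fin 3),
        RCG.Psat G Q i ↔ r i ∈ (Q 0 + Q 1 + Q 2).sum := by
      intro Q i
      unfold RCG.Psat RCG.Trans RCG.out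
      rw [hg i, Multiset.singleton_le, Fin.sum_univ_three]
    rcases h0 with h0 | h0 <;> rcases h1 with h1 | h1 <;> rcases h2 with h2 | h2
    · -- (0,0,0): player 0 contributes
      refine hnd 0 (G.endow 0) (aux_profdev_add pref G r hr hg P 0 ?_ ?_)
      · rw [hpsat]; simp [h0, h1, h2]
      · rw [hpsat]
        simp [Function.update, h1, h2, hend0, r]
    · -- (0,0,X2): player 1 contributes
      refine hnd 1 (G.endow 1) (aux_profdev_add pref G r hr hg P 1 ?_ ?_)
      · rw [hpsat]; simp [h0, h1, h2, r, hBA, hBC]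
      · rw [hpsat]
        simp [Function.update, h0, h2, hend1, r]
    · -- (0,X1,0): player 0 contributes
      refine hnd 0 (G.endow 0) (aux_profdev_add pref G r hr hg P 0 ?_ ?_)
      · rw [hpsat]; simp [h0, h1, h2, r, hAB, hAC]
      · rw [hpsat]
        simp [Function.update, h1, h2, hend0, r]
    · -- (0,X1,X2): player 2 drops
      refine hnd 2 0 (aux_profdev_drop pref G r hr hg P 2 ?_ ?_)
      · rw [h2]; simp
      · rw [hpsat]
        simp [Function.update, h0, h1, r]
    · -- (X0,0,0): player 2 contributes
      refine hnd 2 (G.endow 2) (aux_profdev_add pref G r hr hg P 2 ?_ ?_)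
      · rw [hpsat]; simp [h0, h1, h2, r, hCA, hCB]
      · rw [hpsat]
        simp [Function.update, h0, h1, hend2, r]
    · -- (X0,0,X2): player 0 drops
      refine hnd 0 0 (aux_profdev_drop pref G r hr hg P 0 ?_ ?_)
      · rw [h0]; simp
      · rw [hpsat]
        simp [Function.update, h1, h2, r]
    · -- (X0,X1,0): player 1 drops
      refine hnd 1 0 (aux_profdev_drop pref G r hr hg P 1 ?_ ?_)
      · rw [h1]; simp
      · rw [hpsat]
        simp [Function.update, h0, h2, r]
    · -- (X0,X1,X2): player 0 drops
      refine hnd 0 0 (aux_profdev_drop pref G r hr hg P 0 ?_ ?_)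
      · rw [h0]; simp
      · rw [hpsat]
        simp [Function.update, h1, h2, r]
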